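/- Let M be a square matrix with nonnegative integer entries. If every nonempty principal submatrix of M contains a row all of whose entries are zero, then the spectral radius of M is 0; otherwise the spectral radius of M is at least 1. The same statement holds with 'row' replaced by 'column'. -/

import Mathlib

open Matrix Finset
open scoped NNReal ENNReal

attribute [local instance] Matrix.linftyOpNormedRing Matrix.linftyOpNormedAlgebra

/-- Every nonempty principal submatrix of `M` (indexed by a nonempty `s`) has a zero row. -/
def EveryPrincipalSubmatrixHasZeroRow {n : Type*} [Fintype n] (M : Matrix n n ℕ) : Prop :=
  ∀ s : Finset n, s.Nonempty → ∃ i ∈ s, ∀ j ∈ s, M i j = 0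

/-- Every nonempty principal submatrix of `M` has a zero column. -/
def EveryPrincipalSubmatrixHasZeroCol {n : Type*} [Fintype n] (M : Matrix n n ℕ) : Prop :=
  ∀ s : Finset n, s.Nonempty → ∃ j ∈ s, ∀ i ∈ s, M i j = 0

section Aux

variable {n : Type*} [Fintype n] [DecidableEq n]

private lemma evalCharpoly {R : Type*} [CommRing R] (M : Matrix n n R) (μ : R) :
    M.charpoly.eval μ = (Matrix.diagonal (fun _ => μ) - M).det := by
  rw [Matrix.charpoly, ← Polynomial.coe_evalRingHom, RingHom.map_det]
  congr 1
  ext i j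
  by_cases h : i = j <;>
    simp [Matrix.charmatrix_apply, h, Matrix.diagonal_apply]

private lemma charpolyTranspose {R : Type*} [CommRing R] (A : Matrix n n R) :
    Aᵀ.charpoly = A.charpoly := by
  have h : Matrix.charmatrix Aᵀ = (Matrix.charmatrix A)ᵀ := by
    ext i j
    by_cases h : i = j <;>
      simp [Matrix.charmatrix_apply, Matrix.transpose_apply, h, Matrix.diagonal_apply, eq_comm]
  rw [Matrix.charpoly, h, Matrix.det_transpose, Matrix.charpoly]

private lemma nilpotentOfRow (M : Matrix n n ℕ) (hM : EveryPrincipalSubmatrixHasZeroRow M) :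
    M ^ (Fintype.card n) = 0 := by
  have key : ∀ a : ℕ, ∃ s : Finset n,
      (s.Nonempty → s.card + a ≤ Fintype.card n) ∧ ∀ i ∉ s, ∀ j, (M ^ a) i j = 0 := by
    intro a
    induction a with
    | zero =>
      exact ⟨Finset.univ, fun _ => by simp [Finset.card_univ],
        fun i hi => absurd (Finset.mem_univ i) hi⟩
    | succ a ih =>
      obtain ⟨s, hcard, hzero⟩ := ih
      by_cases hs : s.Nonempty
      · obtain ⟨i', hi's, hrow⟩ := hM s hs
        refine ⟨s.erase i', ?_, ?_⟩
        · intro _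
          have h1 := hcard hs
          have h2 : (s.erase i').card + 1 = s.card := Finset.card_erase_add_one hi's
          omega
        · intro i hi j
          by_cases his : i ∈ s
          · have hii : i = i' := by
              by_contra hne
              exact hi (Finset.mem_erase.mpr ⟨hne, his⟩)
            subst hii
            rw [pow_succ', Matrix.mul_apply]
            apply Finset.sum_eq_zero
            intro c _
            by_cases hc : c ∈ s
            · rw [hrow c hc, zero_mul]
            · rw [hzero c hc j, mul_zero]
          · rw [pow_succ, Matrix.mul_apply]
            apply Finset.sum_eq_zero
            intro c _
            rw [hzero i his c, zero_mul]
      · have hse := Finset.not_nonempty_iff_eq_empty.mp hs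
        subst hse
        refine ⟨∅, fun h => absurd h (by simp), ?_⟩
        intro i _ j
        rw [pow_succ, Matrix.mul_apply]
        apply Finset.sum_eq_zero
        intro c _
        rw [hzero i (Finset.notMem_empty i) c, zero_mul]
  obtain ⟨s, hcard, hzero⟩ := key (Fintype.card n)
  have hs : s = ∅ := by
    by_contra h
    have hne := Finset.nonempty_iff_ne_empty.mpr h
    have h1 := hcard hne
    have h2 := Finset.card_pos.mpr hne
    omega
  subst hs
  ext i j
  simpa using hzero i (Finset.notMem_empty i) j

private lemma BpowX (M : Matrix n n ℕ) (k : ℕ) :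
    (M.map (Nat.cast : ℕ → ℂ)) ^ k = (M ^ k).map (Nat.cast : ℕ → ℂ) := by
  have : M.map (Nat.cast : ℕ → ℂ) = (Nat.castRingHom ℂ).mapMatrix M := rfl
  rw [this, ← map_pow]
  rfl

private lemma muZero [Nonempty n] (M : Matrix n n ℕ) (h : M ^ Fintype.card n = 0) (μ : ℂ)
    (hdet : (Matrix.diagonal (fun _ => μ) - M.map (Nat.cast : ℕ → ℂ)).det = 0) : μ = 0 := by
  set B := M.map (Nat.cast : ℕ → ℂ) with hB
  obtain ⟨v, hv, hmv⟩ := (Matrix.exists_mulVec_eq_zero_iff).mpr hdet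
  have hBv : B.mulVec v = μ • v := by
    have h1 : (Matrix.diagonal (fun _ => μ)).mulVec v - B.mulVec v = 0 := by
      rw [← Matrix.sub_mulVec]; exact hmv
    have h2 : (Matrix.diagonal (fun _ => μ)).mulVec v = μ • v := by
      funext x
      simp [Matrix.mulVec_diagonal]
    rw [h2] at h1
    exact (sub_eq_zero.mp h1).symm
  have hpow : ∀ k, (B ^ k).mulVec v = μ ^ k • v := by
    intro k
    induction k with
    | zero => simp [Matrix.one_mulVec]
    | succ k ih =>
      rw [pow_succ', ← Matrix.mulVec_mulVec, ih, Matrix.mulVec_smul, hBv, pow_succ',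
        smul_smul, mul_comm]
  have hc := hpow (Fintype.card n)
  rw [BpowX, h, Matrix.map_zero _ Nat.cast_zero, Matrix.zero_mulVec] at hc
  have hmu : μ ^ Fintype.card n = 0 := (smul_eq_zero.mp hc.symm).resolve_right hv
  exact pow_eq_zero_iff Fintype.card_ne_zero |>.mp hmu

private lemma keySum (M : Matrix n n ℕ) (s : Finset n) (h : ∀ i ∈ s, ∃ j ∈ s, M i j ≠ 0) :
    ∀ k, ∀ i ∈ s, 1 ≤ ∑ j ∈ s, (M ^ k) i j := by
  intro k
  induction k with
  | zero =>
    intro i hi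
    calc (1:ℕ) = (1 : Matrix n n ℕ) i i := (Matrix.one_apply_eq i).symm
    _ ≤ ∑ j ∈ s, (1 : Matrix n n ℕ) i j :=
        Finset.single_le_sum (fun j _ => Nat.zero_le _) hi
    _ = ∑ j ∈ s, (M ^ 0) i j := by rw [pow_zero]
  | succ k ih =>
    intro i hi
    obtain ⟨j₀, hj₀, hMij⟩ := h i hi
    calc (1:ℕ) ≤ M i j₀ * ∑ j ∈ s, (M ^ k) j₀ j :=
        Nat.one_le_iff_ne_zero.mpr (Nat.mul_ne_zero hMij
          (Nat.one_le_iff_ne_zero.mp (ih j₀ hj₀)))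
    _ ≤ ∑ c ∈ s, M i c * ∑ j ∈ s, (M ^ k) c j :=
        Finset.single_le_sum (f := fun c => M i c * ∑ j ∈ s, (M ^ k) c j)
          (fun c _ => Nat.zero_le _) hj₀
    _ = ∑ c ∈ s, ∑ j ∈ s, M i c * (M ^ k) c j := by
        simp_rw [Finset.mul_sum]
    _ = ∑ j ∈ s, ∑ c ∈ s, M i c * (M ^ k) c j := Finset.sum_comm
    _ ≤ ∑ j ∈ s, ∑ c, M i c * (M ^ k) c j :=
        Finset.sum_le_sum (fun j _ =>
          Finset.sum_le_sum_of_subset (Finset.subset_univ s))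
    _ = ∑ j ∈ s, (M ^ (k+1)) i j := by
        apply Finset.sum_congr rfl
        intro j _
        rw [pow_succ', Matrix.mul_apply]

private lemma bigEig [Nonempty n] (M : Matrix n n ℕ) (s : Finset n) (hs : s.Nonempty)
    (h : ∀ i ∈ s, ∃ j ∈ s, M i j ≠ 0) :
    ∃ μ : ℂ, μ ∈ spectrum ℂ (M.map (Nat.cast : ℕ → ℂ)) ∧ 1 ≤ ‖μ‖ := by
  set B := M.map (Nat.cast : ℕ → ℂ) with hB
  obtain ⟨i₀, hi₀⟩ := hs
  have hnorm : ∀ k, 1 ≤ ‖B ^ k‖₊ := by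
    intro k
    have hsum := keySum M s h k i₀ hi₀
    have hle : (1:ℝ≥0) ≤ ∑ j, ‖(B ^ k) i₀ j‖₊ := by
      calc (1:ℝ≥0) ≤ ((∑ j ∈ s, (M ^ k) i₀ j : ℕ) : ℝ≥0) := by exact_mod_cast hsum
      _ = ∑ j ∈ s, (((M ^ k) i₀ j : ℕ) : ℝ≥0) := by push_cast; ring
      _ = ∑ j ∈ s, ‖(B ^ k) i₀ j‖₊ := by
          apply Finset.sum_congr rfl
          intro j _
          rw [BpowX]
          simp [Matrix.map_apply]
      _ ≤ ∑ j, ‖(B ^ k) i₀ j‖₊ :=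
          Finset.sum_le_sum_of_subset (Finset.subset_univ s)
    calc (1:ℝ≥0) ≤ ∑ j, ‖(B ^ k) i₀ j‖₊ := hle
    _ ≤ ‖B ^ k‖₊ := by
        rw [Matrix.linfty_opNNNorm_def]
        exact Finset.le_sup (f := fun i => ∑ j, ‖(B ^ k) i j‖₊) (Finset.mem_univ i₀)
  have hrad : (1:ℝ≥0∞) ≤ spectralRadius ℂ B := by
    refine ge_of_tendsto (spectrum.pow_nnnorm_pow_one_div_tendsto_nhds_spectralRadius B)
      (Filter.Eventually.of_forall fun k => ?_)
    calc (1:ℝ≥0∞) = (1:ℝ≥0∞) ^ (1/(k:ℝ)) := (ENNReal.one_rpow _).symm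
    _ ≤ (‖B ^ k‖₊ : ℝ≥0∞) ^ (1/(k:ℝ)) :=
        ENNReal.rpow_le_rpow (by exact_mod_cast hnorm k) (by positivity)
  have hne : (spectrum ℂ B).Nonempty := spectrum.nonempty B
  obtain ⟨μ, hμ, hμr⟩ := spectrum.exists_nnnorm_eq_spectralRadius_of_nonempty hne
  refine ⟨μ, hμ, ?_⟩
  rw [← coe_nnnorm]
  have : (1:ℝ≥0∞) ≤ (‖μ‖₊ : ℝ≥0∞) := hμr ▸ hrad
  exact_mod_cast this

private lemma isRootOfMemSpectrum (B : Matrix n n ℂ) (μ : ℂ) (h : μ ∈ spectrum ℂ B) :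
    B.charpoly.IsRoot μ := by
  rw [Polynomial.IsRoot, evalCharpoly]
  by_contra hdet
  apply spectrum.mem_iff.mp h
  have hu : IsUnit (Matrix.diagonal (fun _ => μ) - B) :=
    (Matrix.isUnit_iff_isUnit_det _).mpr (isUnit_iff_ne_zero.mpr hdet)
  have heq : algebraMap ℂ (Matrix n n ℂ) μ - B = Matrix.diagonal (fun _ => μ) - B := by
    rw [Matrix.algebraMap_eq_diagonal]
    rfl
  rw [heq]
  exact hu

/-- The "row" halves of the statement, packaged. -/
private lemma rowHalves [Nonempty n] (M : Matrix n n ℕ) :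
    (EveryPrincipalSubmatrixHasZeroRow M →
        ∀ μ : ℂ, (M.map (Nat.cast : ℕ → ℂ)).charpoly.IsRoot μ → μ = 0) ∧
      (¬ EveryPrincipalSubmatrixHasZeroRow M →
        ∃ μ : ℂ, (M.map (Nat.cast : ℕ → ℂ)).charpoly.IsRoot μ ∧ 1 ≤ ‖μ‖) := by
  constructor
  · intro h μ hroot
    rw [Polynomial.IsRoot, evalCharpoly] at hroot
    exact muZero M (nilpotentOfRow M h) μ hroot
  · intro h
    unfold EveryPrincipalSubmatrixHasZeroRow at h
    push_neg at h
    obtain ⟨s, hs, hprop⟩ := h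
    obtain ⟨μ, hμ, habs⟩ := bigEig M s hs hprop
    exact ⟨μ, isRootOfMemSpectrum _ μ hμ, habs⟩

end Aux

/-- For a square matrix of nonnegative integers: if every principal submatrix has a zero
    row then the spectral radius is 0 (all eigenvalues vanish); otherwise some eigenvalue
    has modulus at least 1. The same holds with "row" replaced by "column". -/
theorem stmt_17 {n : Type*} [Fintype n] [DecidableEq n] [Nonempty n] (M : Matrix n n ℕ) :
    ((EveryPrincipalSubmatrixHasZeroRow M →
        ∀ μ : ℂ, (M.map (Nat.cast : ℕ → ℂ)).charpoly.IsRoot μ → μ = 0) ∧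
      (¬ EveryPrincipalSubmatrixHasZeroRow M →
        ∃ μ : ℂ, (M.map (Nat.cast : ℕ → ℂ)).charpoly.IsRoot μ ∧ 1 ≤ ‖μ‖)) ∧
    ((EveryPrincipalSubmatrixHasZeroCol M →
        ∀ μ : ℂ, (M.map (Nat.cast : ℕ → ℂ)).charpoly.IsRoot μ → μ = 0) ∧
      (¬ EveryPrincipalSubmatrixHasZeroCol M →
        ∃ μ : ℂ, (M.map (Nat.cast : ℕ → ℂ)).charpoly.IsRoot μ ∧ 1 ≤ ‖μ‖)) := by
  refine ⟨rowHalves M, ?_⟩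
  have hcolrow : EveryPrincipalSubmatrixHasZeroCol M ↔
      EveryPrincipalSubmatrixHasZeroRow Mᵀ := Iff.rfl
  have hcp : (Mᵀ.map (Nat.cast : ℕ → ℂ)).charpoly = (M.map (Nat.cast : ℕ → ℂ)).charpoly := by
    rw [Matrix.transpose_map, charpolyTranspose]
  have hT := rowHalves Mᵀ
  rw [hcp] at hT
  rw [hcolrow]
  exact hT
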